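/- In the setting of the candidate-selection mechanism with d-critical monotone valuations on a matroid M: if a bidder i ∉ I* is a candidate (i.e., i ∈ I_i, the greedy set under weights w_i(i)=v_i(s), w_i(j)=v_j(s_{-i},0_i) for j≠i), then there exists j ∈ I* with v_j(s_{-i}, 0_i) < v_j(s). Consequently |𝒞| ≤ (d+1) · |I*|, where 𝒞 is the set of candidates. -/

import Mathlib

open Finset
open scoped Classical

variable {n : ℕ}

/-- The list of indices sorted in nonincreasing order of weight,
breaking ties in favor of lower indices. -/
noncomputable def sortedList (n : ℕ) (w : Fin n → ℝ) : List (Fin n) :=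
  (List.finRange n).mergeSort (fun a b => decide (w b < w a ∨ (w a = w b ∧ a ≤ b)))

/-- Greedy: process the list in order, adding an element whenever independence is kept. -/
noncomputable def greedyAux (Indep : Finset (Fin n) → Prop) :
    List (Fin n) → Finset (Fin n) → Finset (Fin n)
  | [], I => I
  | a :: l, I => greedyAux Indep l (if Indep (insert a I) then insert a I else I)

/-- The greedy algorithm on a matroid with weights `w`. -/
noncomputable def greedy (Indep : Finset (Fin n) → Prop) (w : Fin n → ℝ) : Finset (Fin n) :=
  greedyAux Indep (sortedList n w) ∅

/-- The matroid rank function. -/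
noncomputable def rank (Indep : Finset (Fin n) → Prop) (S : Finset (Fin n)) : ℕ :=
  (S.powerset.filter Indep).sup Finset.card

/-- The weight function used to decide whether bidder `i` is a candidate. -/
noncomputable def wfun {n : ℕ} (v : Fin n → (Fin n → NNReal) → ℝ)
    (s : Fin n → NNReal) (i : Fin n) : Fin n → ℝ :=
  fun j => if j = i then v i s else v j (Function.update s i 0)

namespace Stmt15Aux

/-- The (total, linear) priority relation used by `sortedList`. -/
def rel (w : Fin n → ℝ) (a b : Fin n) : Prop := w b < w a ∨ (w a = w b ∧ a ≤ b)

lemma rel_trans (w : Fin n → ℝ) {a b c : Fin n} (h1 : rel w a b) (h2 : rel w b c) :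
    rel w a c := by
  rcases h1 with h1 | ⟨h1, h1'⟩ <;> rcases h2 with h2 | ⟨h2, h2'⟩
  · exact Or.inl (h2.trans h1)
  · exact Or.inl (h2 ▸ h1)
  · exact Or.inl (h1 ▸ h2)
  · exact Or.inr ⟨h1.trans h2, h1'.trans h2'⟩

lemma rel_antisymm (w : Fin n → ℝ) {a b : Fin n} (h1 : rel w a b) (h2 : rel w b a) :
    a = b := by
  rcases h1 with h1 | ⟨h1, h1'⟩ <;> rcases h2 with h2 | ⟨h2, h2'⟩
  · exact absurd (h1.trans h2) (lt_irrefl _)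
  · rw [h2] at h1; exact absurd h1 (lt_irrefl _)
  · rw [h1] at h2; exact absurd h2 (lt_irrefl _)
  · exact le_antisymm h1' h2'

/-- Strict priority. -/
def sb (w : Fin n → ℝ) (a b : Fin n) : Prop := rel w a b ∧ a ≠ b

lemma sb_trans (w : Fin n → ℝ) {a b c : Fin n} (h1 : sb w a b) (h2 : sb w b c) :
    sb w a c := by
  refine ⟨rel_trans w h1.1 h2.1, ?_⟩
  rintro rfl
  exact h2.2 (rel_antisymm w h2.1 h1.1)

lemma mem_sortedList (w : Fin n → ℝ) (x : Fin n) : x ∈ sortedList n w := by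
  rw [sortedList, (List.mergeSort_perm _ _).mem_iff]
  exact List.mem_finRange x

lemma sortedList_nodup (w : Fin n → ℝ) : (sortedList n w).Nodup :=
  (List.mergeSort_perm _ _).nodup_iff.2 (List.nodup_finRange n)

lemma sortedList_sorted (w : Fin n → ℝ) : (sortedList n w).Pairwise (rel w) := by
  have h := List.pairwise_mergeSort
    (le := fun a b => decide (w b < w a ∨ (w a = w b ∧ a ≤ b)))
    (by
      intro a b c hab hbc
      simp only [decide_eq_true_eq] at hab hbc ⊢
      exact rel_trans w hab hbc)
    (by
      intro a b
      simp only [Bool.or_eq_true, decide_eq_true_eq]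
      rcases lt_trichotomy (w a) (w b) with h | h | h
      · exact Or.inr (Or.inl h)
      · rcases le_total a b with h' | h'
        · exact Or.inl (Or.inr ⟨h, h'⟩)
        · exact Or.inr (Or.inr ⟨h.symm, h'⟩)
      · exact Or.inl (Or.inl h))
    (List.finRange n)
  refine h.imp ?_
  intro a b hab
  simpa only [decide_eq_true_eq, rel] using hab

variable (Indep : Finset (Fin n) → Prop)

lemma subset_greedyAux : ∀ (l : List (Fin n)) (I : Finset (Fin n)), I ⊆ greedyAux Indep l I
  | [], I => by simp [greedyAux]
  | a :: l, I => by
      simp only [greedyAux]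
      refine subset_trans ?_ (subset_greedyAux l _)
      split
      · exact Finset.subset_insert _ _
      · exact subset_rfl

lemma indep_greedyAux (hDown : ∀ A B : Finset (Fin n), A ⊆ B → Indep B → Indep A) :
    ∀ (l : List (Fin n)) (I : Finset (Fin n)), Indep I → Indep (greedyAux Indep l I)
  | [], I, hI => by simpa [greedyAux] using hI
  | a :: l, I, hI => by
      simp only [greedyAux]
      refine indep_greedyAux hDown l _ ?_
      split
      · assumption
      · exact hI

lemma greedyAux_reject (hDown : ∀ A B : Finset (Fin n), A ⊆ B → Indep B → Indep A)
    (w : Fin n → ℝ) :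
    ∀ (l : List (Fin n)) (I : Finset (Fin n)) (x : Fin n),
      l.Pairwise (rel w) → l.Nodup → x ∈ l → x ∉ greedyAux Indep l I →
      ¬ Indep (insert x (I ∪ (greedyAux Indep l I).filter (fun y => sb w y x)))
  | [], I, x, _, _, hx, _ => absurd hx List.not_mem_nil
  | a :: l, I, x, hsort, hnodup, hx, hxg => by
      simp only [greedyAux] at hxg ⊢
      rcases List.mem_cons.1 hx with rfl | hxl
      · -- x = a : it was rejected at this step
        have ha : ¬ Indep (insert x I) := by
          intro h
          apply hxg
          have : x ∈ (if Indep (insert x I) then insert x I else I) := by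
            rw [if_pos h]; exact Finset.mem_insert_self _ _
          exact subset_greedyAux Indep l _ this
        intro h
        exact ha (hDown _ _ (Finset.insert_subset_insert _ Finset.subset_union_left) h)
      · -- x occurs later
        have hax : x ≠ a := by
          rintro rfl
          exact (List.nodup_cons.1 hnodup).1 hxl
        have IH := greedyAux_reject hDown w l
          (if Indep (insert a I) then insert a I else I) x
          (List.pairwise_cons.1 hsort).2 (List.nodup_cons.1 hnodup).2 hxl hxg
        intro h
        apply IH
        refine hDown _ _ ?_ h
        apply Finset.insert_subset_insert
        apply Finset.union_subset
        · -- I' ⊆ I ∪ filter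
          split
          case isTrue hInd =>
            apply Finset.insert_subset
            · refine Finset.mem_union_right _ (Finset.mem_filter.2 ⟨?_, ?_, hax.symm⟩)
              · exact subset_greedyAux Indep l _ (Finset.mem_insert_self _ _)
              · exact (List.pairwise_cons.1 hsort).1 x hxl
            · exact Finset.subset_union_left
          case isFalse => exact Finset.subset_union_left
        · exact Finset.subset_union_right
  termination_by l => l.length

lemma greedy_indep (hEmpty : Indep ∅) (hDown : ∀ A B : Finset (Fin n), A ⊆ B → Indep B → Indep A)
    (w : Fin n → ℝ) : Indep (greedy Indep w) :=
  indep_greedyAux Indep hDown _ _ hEmpty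

lemma greedy_reject (hDown : ∀ A B : Finset (Fin n), A ⊆ B → Indep B → Indep A)
    (w : Fin n → ℝ) {x : Fin n} (hx : x ∉ greedy Indep w) :
    ¬ Indep (insert x ((greedy Indep w).filter (fun y => sb w y x))) := by
  have h := greedyAux_reject Indep hDown w (sortedList n w) ∅ x
    (sortedList_sorted w) (sortedList_nodup w) (mem_sortedList w x) hx
  simpa [greedy] using h

lemma span_lemma (hDown : ∀ A B : Finset (Fin n), A ⊆ B → Indep B → Indep A)
    (hExch : ∀ A B : Finset (Fin n), Indep A → Indep B → A.card < B.card →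
      ∃ x ∈ B, x ∉ A ∧ Indep (insert x A))
    {A B : Finset (Fin n)} {i : Fin n}
    (hA : Indep A) (hB : Indep B) (hiB : Indep (insert i B)) (hiBn : i ∉ B)
    (hAB : ∀ a ∈ A, a ∈ B ∨ ¬ Indep (insert a B)) :
    Indep (insert i A) := by
  by_cases hiA : i ∈ A
  · rwa [Finset.insert_eq_self.2 hiA]
  have hrank : ∀ J : Finset (Fin n), J ⊆ A ∪ B → Indep J → J.card ≤ B.card := by
    intro J hJs hJ
    by_contra h
    push_neg at h
    obtain ⟨x, hxJ, hxB, hxind⟩ := hExch B J hB hJ h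
    rcases Finset.mem_union.1 (hJs hxJ) with hxA | hxB'
    · rcases hAB x hxA with h1 | h1
      exacts [hxB h1, h1 hxind]
    · exact hxB hxB'
  have grow : ∀ k (A' : Finset (Fin n)), Indep A' → A ⊆ A' → A' ⊆ A ∪ B →
      B.card ≤ A'.card + k →
      ∃ A'', A ⊆ A'' ∧ A'' ⊆ A ∪ B ∧ Indep A'' ∧ A''.card = B.card := by
    intro k
    induction k with
    | zero =>
        intro A' h1 h2 h3 h4
        exact ⟨A', h2, h3, h1, le_antisymm (hrank A' h3 h1) (by simpa using h4)⟩
    | succ k ih =>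
        intro A' h1 h2 h3 h4
        by_cases hc : B.card ≤ A'.card
        · exact ⟨A', h2, h3, h1, le_antisymm (hrank A' h3 h1) hc⟩
        · push_neg at hc
          obtain ⟨x, hxB, hxA', hxi⟩ := hExch A' B h1 hB hc
          refine ih (insert x A') hxi (h2.trans (Finset.subset_insert _ _))
            (Finset.insert_subset (Finset.mem_union_right _ hxB) h3) ?_
          rw [Finset.card_insert_of_notMem hxA']
          omega
  obtain ⟨A'', hA''1, hA''2, hA''3, hA''4⟩ :=
    grow B.card A hA subset_rfl Finset.subset_union_left (by omega)
  have hiA'' : i ∉ A'' := by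
    intro h
    rcases Finset.mem_union.1 (hA''2 h) with h' | h'
    exacts [hiA h', hiBn h']
  have hcard : A''.card < (insert i B).card := by
    rw [Finset.card_insert_of_notMem hiBn, hA''4]
    omega
  obtain ⟨x, hxiB, hxA'', hxind⟩ := hExch A'' (insert i B) hA''3 hiB hcard
  rcases Finset.mem_insert.1 hxiB with rfl | hxB
  · exact hDown _ _ (Finset.insert_subset_insert _ hA''1) hxind
  · exfalso
    have hle : (insert x A'').card ≤ B.card :=
      hrank _ (Finset.insert_subset (Finset.mem_union_right _ hxB) hA''2) hxind
    rw [Finset.card_insert_of_notMem hxA'', hA''4] at hle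
    omega

end Stmt15Aux

open Stmt15Aux in
/-- If a bidder `i ∉ I*` is a candidate then some `j ∈ I*` has `v j (s_{-i},0_i) < v j s`;
consequently, for `d`-critical valuations, `|𝒞| ≤ (d+1)·|I*|`. -/
theorem stmt_15 {n : ℕ} (Indep : Finset (Fin n) → Prop)
    (hEmpty : Indep ∅)
    (hDown : ∀ A B : Finset (Fin n), A ⊆ B → Indep B → Indep A)
    (hExch : ∀ A B : Finset (Fin n), Indep A → Indep B → A.card < B.card →
      ∃ x ∈ B, x ∉ A ∧ Indep (insert x A))
    (d : ℕ) (v : Fin n → (Fin n → NNReal) → ℝ)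
    (hmono : ∀ i, Monotone (v i))
    (hnonneg : ∀ i t, 0 ≤ v i t)
    (hcrit : ∀ (j : Fin n) (t : Fin n → NNReal),
      (Finset.univ.filter fun k => v j (Function.update t k 0) < v j t).card ≤ d)
    (s : Fin n → NNReal)
    (Istar C : Finset (Fin n))
    (hIstar : Istar = greedy Indep (fun j => v j s))
    (hC : C = Finset.univ.filter fun i => i ∈ greedy Indep (wfun v s i)) :
    (∀ i : Fin n, i ∉ Istar → i ∈ greedy Indep (wfun v s i) →
        ∃ j ∈ Istar, v j (Function.update s i 0) < v j s) ∧
    C.card ≤ (d + 1) * Istar.card := by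
  have key : ∀ i : Fin n, i ∉ Istar → i ∈ greedy Indep (wfun v s i) →
      ∃ j ∈ Istar, v j (Function.update s i 0) < v j s := by
    intro i hiI hiG
    by_contra hcon
    push_neg at hcon
    -- notation
    set w : Fin n → ℝ := fun j => v j s with hw
    set w' : Fin n → ℝ := wfun v s i with hw'
    have hupd : Function.update s i 0 ≤ s := by
      intro k
      rcases eq_or_ne k i with rfl | hk
      · simp
      · simp [Function.update_apply, hk]
    have heq : ∀ j ∈ Istar, w' j = w j := by
      intro j hj
      have hji : j ≠ i := by rintro rfl; exact hiI hj
      have h1 : w' j = v j (Function.update s i 0) := by simp [hw', wfun, hji]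
      rw [h1]
      exact le_antisymm (hmono j hupd) (hcon j hj)
    have heqi : w' i = w i := by simp [hw', wfun, hw]
    set G' : Finset (Fin n) := greedy Indep w' with hG'
    set A : Finset (Fin n) := Istar.filter (fun a => sb w a i) with hA
    set B : Finset (Fin n) := G'.filter (fun a => sb w' a i) with hB
    have hIstarIndep : Indep Istar := hIstar ▸ greedy_indep Indep hEmpty hDown w
    have hG'Indep : Indep G' := greedy_indep Indep hEmpty hDown w'
    have hAind : Indep A := hDown _ _ (Finset.filter_subset _ _) hIstarIndep
    have hBind : Indep B := hDown _ _ (Finset.filter_subset _ _) hG'Indep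
    have hiBind : Indep (insert i B) :=
      hDown _ _ (Finset.insert_subset hiG (Finset.filter_subset _ _)) hG'Indep
    have hiB : i ∉ B := by
      rw [hB]; intro h; exact (Finset.mem_filter.1 h).2.2 rfl
    have hnotiA : ¬ Indep (insert i A) := by
      have h := greedy_reject Indep hDown w (x := i) (hIstar ▸ hiI)
      rw [hA, hIstar]
      exact h
    have hAB : ∀ a ∈ A, a ∈ B ∨ ¬ Indep (insert a B) := by
      intro a ha
      obtain ⟨haI, hsb⟩ := Finset.mem_filter.1 ha
      have hsb' : sb w' a i := by
        refine ⟨?_, hsb.2⟩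
        have h1 := heq a haI
        have h2 := heqi
        rcases hsb.1 with h | ⟨h, h'⟩
        · exact Or.inl (by rw [h1, h2]; exact h)
        · exact Or.inr ⟨by rw [h1, h2]; exact h, h'⟩
      by_cases hG : a ∈ G'
      · exact Or.inl (Finset.mem_filter.2 ⟨hG, hsb'⟩)
      · right
        intro hind
        apply greedy_reject Indep hDown w' (x := a) hG
        refine hDown _ _ ?_ hind
        apply Finset.insert_subset_insert
        intro y hy
        obtain ⟨hyG, hysb⟩ := Finset.mem_filter.1 hy
        exact Finset.mem_filter.2 ⟨hyG, sb_trans w' hysb hsb'⟩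
    exact hnotiA (span_lemma Indep hDown hExch hAind hBind hiBind hiB hAB)
  refine ⟨key, ?_⟩
  have hsub : C ⊆ Istar ∪ Istar.biUnion
      (fun j => Finset.univ.filter fun k => v j (Function.update s k 0) < v j s) := by
    intro i hi
    rw [hC, Finset.mem_filter] at hi
    by_cases h : i ∈ Istar
    · exact Finset.mem_union_left _ h
    · obtain ⟨j, hj, hlt⟩ := key i h hi.2
      exact Finset.mem_union_right _
        (Finset.mem_biUnion.2 ⟨j, hj, Finset.mem_filter.2 ⟨Finset.mem_univ _, hlt⟩⟩)
  calc C.card ≤ (Istar ∪ Istar.biUnion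
        (fun j => Finset.univ.filter fun k => v j (Function.update s k 0) < v j s)).card :=
        Finset.card_le_card hsub
    _ ≤ Istar.card + (Istar.biUnion
        (fun j => Finset.univ.filter fun k => v j (Function.update s k 0) < v j s)).card :=
        Finset.card_union_le _ _
    _ ≤ Istar.card + ∑ j ∈ Istar,
        (Finset.univ.filter fun k => v j (Function.update s k 0) < v j s).card :=
        Nat.add_le_add_left (Finset.card_biUnion_le) _
    _ ≤ Istar.card + Istar.card * d := by
        refine Nat.add_le_add_left ?_ _
        calc ∑ j ∈ Istar, (Finset.univ.filter fun k => v j (Function.update s k 0) < v j s).card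
            ≤ ∑ _j ∈ Istar, d := Finset.sum_le_sum (fun j _ => hcrit j s)
          _ = Istar.card * d := by rw [Finset.sum_const, smul_eq_mul]
    _ = (d + 1) * Istar.card := by ring
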